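/- Let g : ℝ → ℝ with g = F_ν^{-1} ∘ Φ be differentiable, and suppose there are constants 0 < c ≤ g'(x) ≤ C < ∞ for all x. Then there exist K > 0 and σ₁, σ₂ > 0 such that for all x > K: Φ(x/σ₁) ≤ F_ν(x) ≤ Φ(x/σ₂), and for all x < -K: Φ(x/σ₂) ≤ F_ν(x) ≤ Φ(x/σ₁). -/

import Mathlib

open MeasureTheory ProbabilityTheory Filter Set

lemma gauss_cdf_pos (x : ℝ) : 0 < cdf (gaussianReal 0 1) x := by
  have hac := gaussianReal_absolutelyContinuous' 0 (one_ne_zero)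
  have hne : gaussianReal 0 1 (Iic x) ≠ 0 := by
    intro h
    have := hac h
    rw [Real.volume_Iic] at this
    simp at this
  rw [cdf_eq_real, measureReal_def]
  exact ENNReal.toReal_pos hne (measure_ne_top _ _)

lemma gauss_cdf_lt_one (x : ℝ) : cdf (gaussianReal 0 1) x < 1 := by
  have hac := gaussianReal_absolutelyContinuous' 0 (one_ne_zero)
  have hne : gaussianReal 0 1 (Ioi x) ≠ 0 := by
    intro h
    have := hac h
    rw [Real.volume_Ioi] at this
    simp at this
  rw [cdf_eq_real, measureReal_def]
  have h1 : gaussianReal 0 1 (Iic x) < 1 := by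
    by_contra h
    push_neg at h
    have heq : gaussianReal 0 1 (Iic x) = 1 := le_antisymm prob_le_one h
    have hco := measure_compl (μ := gaussianReal 0 1) (measurableSet_Iic (a := x))
      (measure_ne_top _ _)
    rw [Set.compl_Iic, heq, measure_univ] at hco
    simp at hco
    exact hne hco
  have := ENNReal.toReal_lt_toReal (measure_ne_top (gaussianReal 0 1) (Iic x)) ENNReal.one_ne_top
  rw [ENNReal.toReal_one] at this
  exact this.mpr h1

/-- If `g = F_ν^{-1} ∘ Φ` is differentiable with `0 < c ≤ g' ≤ C`, then the tails of
`ν` are comparable, on both sides, to tails of centered Gaussians. -/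
theorem tails_comparable (ν : Measure ℝ) [IsProbabilityMeasure ν] (g : ℝ → ℝ)
    (hg : ∀ x, g x = sInf {y : ℝ | cdf (gaussianReal 0 1) x < cdf ν y})
    (hdiff : Differentiable ℝ g) (c C : ℝ) (hc : 0 < c)
    (hbounds : ∀ x, c ≤ deriv g x ∧ deriv g x ≤ C) :
    ∃ K > (0 : ℝ), ∃ σ₁ > (0 : ℝ), ∃ σ₂ > (0 : ℝ),
      (∀ x > K, cdf (gaussianReal 0 1) (x / σ₁) ≤ cdf ν x ∧
        cdf ν x ≤ cdf (gaussianReal 0 1) (x / σ₂)) ∧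
      (∀ x < -K, cdf (gaussianReal 0 1) (x / σ₂) ≤ cdf ν x ∧
        cdf ν x ≤ cdf (gaussianReal 0 1) (x / σ₁)) := by
  set Φ := cdf (gaussianReal 0 1) with hΦ
  set F := cdf ν with hFdef
  have hC : 0 < C := lt_of_lt_of_le hc ((hbounds 0).1.trans (hbounds 0).2)
  -- g is strictly monotone
  have hgmono : StrictMono g :=
    strictMono_of_deriv_pos fun x => lt_of_lt_of_le hc (hbounds x).1
  -- linear growth bounds
  have hlow : Monotone (fun x => g x - c * x) := by
    apply monotone_of_deriv_nonneg (by fun_prop)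
    intro x
    rw [deriv_fun_sub (hdiff x) (by fun_prop), deriv_const_mul _ (by fun_prop)]
    simp only [deriv_id'', mul_one]
    linarith [(hbounds x).1]
  have hhigh : Monotone (fun x => C * x - g x) := by
    apply monotone_of_deriv_nonneg (by fun_prop)
    intro x
    rw [deriv_fun_sub (by fun_prop) (hdiff x), deriv_const_mul _ (by fun_prop)]
    simp only [deriv_id'', mul_one]
    linarith [(hbounds x).2]
  -- g is surjective
  have hsurj : Function.Surjective g := by
    apply hdiff.continuous.surjective
    · apply tendsto_atTop_mono' _ ?_
        (tendsto_atTop_add_const_left _ (g 0) ((tendsto_const_mul_atTop_of_pos hc).2 tendsto_id))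
      filter_upwards [Filter.eventually_ge_atTop (0:ℝ)] with t ht
      have := hlow ht
      simp only [mul_zero, sub_zero, id] at this ⊢
      linarith
    · apply tendsto_atBot_mono' _ ?_
        (tendsto_atBot_add_const_left _ (g 0) ((tendsto_const_mul_atBot_of_pos hc).2 tendsto_id))
      filter_upwards [Filter.eventually_le_atBot (0:ℝ)] with t ht
      have := hlow ht
      simp only [mul_zero, sub_zero, id] at this ⊢
      linarith
  -- the set defining g
  set S : ℝ → Set ℝ := fun t => {y : ℝ | Φ t < F y} with hS
  have hSne : ∀ t, (S t).Nonempty := by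
    intro t
    have h1 : Φ t < 1 := gauss_cdf_lt_one t
    have := (tendsto_cdf_atTop ν).eventually (eventually_gt_nhds h1)
    obtain ⟨y, hy⟩ := this.exists
    exact ⟨y, hy⟩
  have hSbdd : ∀ t, BddBelow (S t) := by
    intro t
    have h0 : 0 < Φ t := gauss_cdf_pos t
    have := (tendsto_cdf_atBot ν).eventually (eventually_lt_nhds h0)
    obtain ⟨y₀, hy₀⟩ := this.exists
    refine ⟨y₀, fun y hy => ?_⟩
    by_contra h
    push_neg at h
    exact absurd (lt_of_le_of_lt (F.mono h.le) hy₀) (not_lt.2 (le_of_lt hy))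
  -- F (g t) = Φ t
  have hkey : ∀ t, F (g t) = Φ t := by
    intro t
    have hge : Φ t ≤ F (g t) := by
      have htend : Tendsto F (nhdsWithin (g t) (Ioi (g t))) (nhds (F (g t))) :=
        ((cdf ν).right_continuous (g t)).tendsto.mono_left
          (nhdsWithin_mono _ Ioi_subset_Ici_self)
      refine ge_of_tendsto htend ?_
      filter_upwards [self_mem_nhdsWithin] with u hu
      have hlt : sInf (S t) < u := by rw [← hg t]; exact hu
      obtain ⟨y, hyS, hyu⟩ := exists_lt_of_csInf_lt (hSne t) hlt
      exact le_of_lt (lt_of_lt_of_le hyS (F.mono hyu.le))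
    have hle : F (g t) ≤ Φ t := by
      have hcont : Tendsto Φ (nhdsWithin t (Ioi t)) (nhds (Φ t)) :=
        ((cdf (gaussianReal 0 1)).right_continuous t).tendsto.mono_left
          (nhdsWithin_mono _ Ioi_subset_Ici_self)
      refine ge_of_tendsto hcont ?_
      filter_upwards [self_mem_nhdsWithin] with s hs
      by_contra h
      push_neg at h
      have hmem : g t ∈ S s := h
      have : g s ≤ g t := by rw [hg s]; exact csInf_le (hSbdd s) hmem
      exact absurd (hgmono hs) (not_lt.2 this)
    exact le_antisymm hle hge
  -- choose constants
  set a := g 0 with ha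
  refine ⟨max (2 * |a|) 1, lt_of_lt_of_le one_pos (le_max_right _ _),
    2 * C, by positivity, c / 2, by positivity, ?_, ?_⟩
  · intro x hx
    obtain ⟨t, rfl⟩ := hsurj x
    have hxa : 2 * |a| < g t := lt_of_le_of_lt (le_max_left _ _) hx
    have hx1 : (1:ℝ) < g t := lt_of_le_of_lt (le_max_right _ _) hx
    have hta : a < g t := by
      have : a ≤ |a| := le_abs_self a
      nlinarith [abs_nonneg a]
    have ht0 : 0 < t := by
      exact hgmono.lt_iff_lt.mp hta
    have hup : g t ≤ a + C * t := by
      have := hhigh ht0.le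
      simp only [mul_zero, zero_sub] at this
      linarith
    have hlo : a + c * t ≤ g t := by
      have := hlow ht0.le
      simp only [mul_zero, sub_zero] at this
      linarith
    constructor
    · -- Φ (x / (2C)) ≤ Φ t = F x
      rw [hkey t]
      apply (cdf (gaussianReal 0 1)).mono
      rw [div_le_iff₀ (by positivity)]
      nlinarith [le_abs_self a, abs_nonneg a]
    · rw [hkey t]
      apply (cdf (gaussianReal 0 1)).mono
      rw [le_div_iff₀ (by positivity)]
      nlinarith [neg_abs_le a, abs_nonneg a]
  · intro x hx
    obtain ⟨t, rfl⟩ := hsurj x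
    have hxa : g t < -(2 * |a|) := lt_of_lt_of_le hx (by
      simp only [neg_le_neg_iff]; exact le_max_left _ _)
    have hta : g t < a := by
      have : -|a| ≤ a := neg_abs_le a
      nlinarith [abs_nonneg a]
    have ht0 : t < 0 := by
      exact hgmono.lt_iff_lt.mp hta
    have hup : g t ≤ a + c * t := by
      have := hlow ht0.le
      simp only [mul_zero, sub_zero] at this
      linarith
    have hlo : a + C * t ≤ g t := by
      have := hhigh ht0.le
      simp only [mul_zero, zero_sub] at this
      linarith
    constructor
    · rw [hkey t]
      apply (cdf (gaussianReal 0 1)).mono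
      rw [div_le_iff₀ (by positivity)]
      -- g t / (c/2) ≤ t, i.e. 2 * g t ≤ c * t ... careful: need g t / (c/2) ≤ t ↔ g t ≤ t * (c/2)
      nlinarith [le_abs_self a, abs_nonneg a]
    · rw [hkey t]
      apply (cdf (gaussianReal 0 1)).mono
      rw [le_div_iff₀ (by positivity)]
      nlinarith [neg_abs_le a, abs_nonneg a]
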